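/- arXiv:1203.2461 — 5 statements merged into one kernel-verified Lean document; each statement's English description precedes it below -/
import Mathlib

section
/- Any group object G in the category of simplicial sets over a discrete (constant) simplicial set Y is such that the structure map G → Y is a Kan fibration. -/
open CategoryTheory SSet Simplicial

universe u

/-- A group object in the category of simplicial sets over the constant simplicial set on a
set `Y`: a simplicial set `G` with a projection `p : G ⟶ Y` (to the constant simplicial
set), a fiberwise multiplication (defined on pairs of simplices lying in the same fiber),
fiberwise units and fiberwise inverses, all compatible with the simplicial structure maps;
equivalently, each fiber `p⁻¹(y)` is a simplicial group. -/
structure SimplicialGroupOver (Y : Type u) where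
  G : SSet.{u}
  p : G ⟶ (Functor.const SimplexCategoryᵒᵖ).obj Y
  one : ∀ (m : SimplexCategoryᵒᵖ), Y → G.obj m
  mul : ∀ (m : SimplexCategoryᵒᵖ) (x y : G.obj m), p.app m x = p.app m y → G.obj m
  inv : ∀ (m : SimplexCategoryᵒᵖ), G.obj m → G.obj m
  p_one : ∀ m y, p.app m (one m y) = y
  p_mul : ∀ m x y h, p.app m (mul m x y h) = p.app m x
  p_inv : ∀ m x, p.app m (inv m x) = p.app m x
  one_mul : ∀ m x, mul m (one m (p.app m x)) x (p_one m _) = x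
  mul_one : ∀ m x, mul m x (one m (p.app m x)) (p_one m _).symm = x
  mul_assoc : ∀ m x y z (h₁ : p.app m x = p.app m y) (h₂ : p.app m y = p.app m z),
    mul m (mul m x y h₁) z ((p_mul m x y h₁).trans (h₁.trans h₂)) =
      mul m x (mul m y z h₂) (h₁.trans (p_mul m y z h₂).symm)
  inv_mul : ∀ m x, mul m (inv m x) x (p_inv m x) = one m (p.app m x)
  map_one : ∀ {m m'} (f : m ⟶ m') y, G.map f (one m y) = one m' y
  map_mul : ∀ {m m'} (f : m ⟶ m') x y (h : p.app m x = p.app m y)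
    (h' : p.app m' (G.map f x) = p.app m' (G.map f y)),
    G.map f (mul m x y h) = mul m' (G.map f x) (G.map f y) h'
  map_inv : ∀ {m m'} (f : m ⟶ m') x, G.map f (inv m x) = inv m' (G.map f x)

namespace MooreKan


open SimplexCategory Opposite

variable {Y : Type u} (GG : SimplicialGroupOver Y) (y : Y)

/-- The fiber of `p` over `y`, levelwise. -/
def Fib (m : SimplexCategoryᵒᵖ) : Type u := {x : GG.G.obj m // GG.p.app m x = y}

instance (m : SimplexCategoryᵒᵖ) : Group (Fib GG y m) where
  mul a b := ⟨GG.mul m a.1 b.1 (a.2.trans b.2.symm), (GG.p_mul m _ _ _).trans a.2⟩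
  one := ⟨GG.one m y, GG.p_one m y⟩
  inv a := ⟨GG.inv m a.1, (GG.p_inv m a.1).trans a.2⟩
  mul_assoc a b c := Subtype.ext (GG.mul_assoc m a.1 b.1 c.1 _ _)
  one_mul a := by
    obtain ⟨a, ha⟩ := a
    subst ha
    exact Subtype.ext (GG.one_mul m a)
  mul_one a := by
    obtain ⟨a, ha⟩ := a
    subst ha
    exact Subtype.ext (GG.mul_one m a)
  inv_mul_cancel a := by
    obtain ⟨a, ha⟩ := a
    subst ha
    exact Subtype.ext (GG.inv_mul m a)

lemma mul_val {m} (a b : Fib GG y m) :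
    (a * b).1 = GG.mul m a.1 b.1 (a.2.trans b.2.symm) := rfl

lemma one_val {m} : (1 : Fib GG y m).1 = GG.one m y := rfl

lemma inv_val {m} (a : Fib GG y m) : (a⁻¹).1 = GG.inv m a.1 := rfl

def fmap {m m' : SimplexCategoryᵒᵖ} (φ : m ⟶ m') (a : Fib GG y m) : Fib GG y m' :=
  ⟨GG.G.map φ a.1, by
    have h := ConcreteCategory.congr_hom (GG.p.naturality φ) a.1
    simp only [Functor.const_obj_obj, Functor.const_obj_map, types_comp_apply,
      types_id_apply] at h
    exact h.trans a.2⟩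

variable {GG y}

lemma fmap_val {m m'} (φ : m ⟶ m') (a : Fib GG y m) :
    (fmap GG y φ a).1 = GG.G.map φ a.1 := rfl

lemma fmap_one {m m'} (φ : m ⟶ m') : fmap GG y φ 1 = 1 :=
  Subtype.ext (GG.map_one φ y)

lemma fmap_mul {m m'} (φ : m ⟶ m') (a b : Fib GG y m) :
    fmap GG y φ (a * b) = fmap GG y φ a * fmap GG y φ b :=
  Subtype.ext (GG.map_mul φ a.1 b.1 _ (((fmap GG y φ a).2.trans (fmap GG y φ b).2.symm)))

lemma fmap_inv {m m'} (φ : m ⟶ m') (a : Fib GG y m) :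
    fmap GG y φ a⁻¹ = (fmap GG y φ a)⁻¹ :=
  Subtype.ext (GG.map_inv φ a.1)

lemma fmap_fmap {m m' m''} (φ : m ⟶ m') (ψ : m' ⟶ m'') (a : Fib GG y m) :
    fmap GG y ψ (fmap GG y φ a) = fmap GG y (φ ≫ ψ) a :=
  Subtype.ext ((FunctorToTypes.map_comp_apply GG.G φ ψ a.1).symm)

lemma fmap_id {m} (a : Fib GG y m) : fmap GG y (𝟙 m) a = a :=
  Subtype.ext (FunctorToTypes.map_id_apply GG.G a.1)



def phase1 {A : Type u} {B : Type v} [Group A] [Group B] (l iv : ℕ) (hiv : iv < l + 3)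
    (d : Fin (l + 3) → A → B) (s : Fin (l + 2) → B → A) (x : Fin (l + 3) → B) : ℕ → A
| 0 => 1
| r + 1 =>
    if h : r < iv then
      phase1 l iv hiv d s x r *
        s ⟨r, by omega⟩ ((d ⟨r, by omega⟩ (phase1 l iv hiv d s x r))⁻¹ * x ⟨r, by omega⟩)
    else phase1 l iv hiv d s x r

def phase2 {A : Type u} {B : Type v} [Group A] [Group B] (l iv : ℕ)
    (d : Fin (l + 3) → A → B) (s : Fin (l + 2) → B → A) (x : Fin (l + 3) → B)
    (u0 : A) : ℕ → A
| 0 => u0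
| t + 1 =>
    if _h : iv < l + 2 - t then
      phase2 l iv d s x u0 t *
        s ⟨l + 2 - t - 1, by omega⟩
          ((d ⟨l + 2 - t, by omega⟩ (phase2 l iv d s x u0 t))⁻¹ * x ⟨l + 2 - t, by omega⟩)
    else phase2 l iv d s x u0 t

theorem moore_filler {A : Type u} {B : Type v} {C : Type w} [Group A] [Group B] [Group C]
    (l : ℕ) (i : Fin (l + 3))
    (d : Fin (l + 3) → A → B) (s : Fin (l + 2) → B → A)
    (d' : Fin (l + 2) → B → C) (s' : Fin (l + 1) → C → B)
    (hd_mul : ∀ j a b, d j (a * b) = d j a * d j b)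
    (hd'_mul : ∀ j a b, d' j (a * b) = d' j a * d' j b)
    (hd'_inv : ∀ j a, d' j a⁻¹ = (d' j a)⁻¹)
    (hs'_one : ∀ j, s' j 1 = 1)
    (I1 : ∀ (a : ℕ) (h : a < l + 2) (u : B), d ⟨a, by omega⟩ (s ⟨a, h⟩ u) = u)
    (I2 : ∀ (a : ℕ) (h : a < l + 2) (u : B), d ⟨a + 1, by omega⟩ (s ⟨a, h⟩ u) = u)
    (I3 : ∀ (a b : ℕ) (hab : a ≤ b) (hb : b < l + 1) (u : B),
      d ⟨a, by omega⟩ (s ⟨b + 1, by omega⟩ u) = s' ⟨b, hb⟩ (d' ⟨a, by omega⟩ u))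
    (I4 : ∀ (a b : ℕ) (hba : b < a) (ha : a < l + 2) (u : B),
      d ⟨a + 1, by omega⟩ (s ⟨b, by omega⟩ u) = s' ⟨b, by omega⟩ (d' ⟨a, ha⟩ u))
    (I5 : ∀ (a b : ℕ) (hab : a ≤ b) (hb : b < l + 2) (z : A),
      d' ⟨a, by omega⟩ (d ⟨b + 1, by omega⟩ z) = d' ⟨b, hb⟩ (d ⟨a, by omega⟩ z))
    (x : Fin (l + 3) → B)
    (compat : ∀ (a b : ℕ) (hab : a < b) (hb : b < l + 3),
      (⟨a, by omega⟩ : Fin (l + 3)) ≠ i → (⟨b, hb⟩ : Fin (l + 3)) ≠ i →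
      d' ⟨a, by omega⟩ (x ⟨b, hb⟩) = d' ⟨b - 1, by omega⟩ (x ⟨a, by omega⟩)) :
    ∃ z : A, ∀ j : Fin (l + 3), j ≠ i → d j z = x j := by
  have hiv := i.isLt
  set iv := i.1 with hivdef
  have fne : ∀ (a : ℕ) (h : a < l + 3), a ≠ iv → (⟨a, h⟩ : Fin (l + 3)) ≠ i :=
    fun a h hn => Fin.ne_of_val_ne hn
  -- Phase 1
  have claim1 : ∀ r, r ≤ iv → ∀ (a : ℕ) (ha3 : a < l + 3), a < r →
      d ⟨a, ha3⟩ (phase1 l iv hiv d s x r) = x ⟨a, ha3⟩ := by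
    intro r
    induction r with
    | zero => omega
    | succ r ih =>
      intro hr a ha3 har
      have hr' : r < iv := by omega
      simp only [phase1, dif_pos hr']
      rw [hd_mul]
      rcases Nat.lt_or_ge a r with hlt | hge
      · -- a < r
        obtain ⟨r', rfl⟩ : ∃ r', r = r' + 1 := ⟨r - 1, by omega⟩
        rw [I3 a r' (by omega) (by omega)]
        rw [hd'_mul, hd'_inv]
        rw [I5 a r' (by omega) (by omega)]
        rw [ih (by omega) a ha3 hlt]
        have hcmp := compat a (r' + 1) (by omega) (by omega)
          (fne _ (by omega) (by omega)) (fne _ (by omega) (by omega))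
        simp only [Nat.add_sub_cancel] at hcmp
        rw [hcmp]
        rw [inv_mul_cancel, hs'_one, mul_one]
      · -- a = r
        have : a = r := by omega
        subst this
        rw [I1 a (by omega)]
        rw [mul_inv_cancel_left]
  -- Phase 2
  have claim2 : ∀ t, t ≤ l + 2 - iv → ∀ (a : ℕ) (ha3 : a < l + 3),
      (a < iv ∨ l + 2 - t < a) →
      d ⟨a, ha3⟩ (phase2 l iv d s x (phase1 l iv hiv d s x iv) t) = x ⟨a, ha3⟩ := by
    intro t
    induction t with
    | zero =>
      intro _ a ha3 hcond
      have ha : a < iv := by omega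
      simp only [phase2]
      exact claim1 iv le_rfl a ha3 ha
    | succ t ih =>
      intro ht a ha3 hcond
      have h : iv < l + 2 - t := by omega
      simp only [phase2, dif_pos h]
      rw [hd_mul]
      obtain ⟨r', hr'⟩ : ∃ r', l + 2 - t = r' + 1 := ⟨l + 1 - t, by omega⟩
      simp only [hr', Nat.add_sub_cancel]
      set U := phase2 l iv d s x (phase1 l iv hiv d s x iv) t with hU
      rcases hcond with hlt | hgt
      · -- a < iv ≤ r'
        have har : a < r' := by omega
        obtain ⟨r'', rfl⟩ : ∃ r'', r' = r'' + 1 := ⟨r' - 1, by omega⟩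
        rw [I3 a r'' (by omega) (by omega)]
        rw [hd'_mul, hd'_inv]
        rw [I5 a (r'' + 1) (by omega) (by omega)]
        rw [ih (by omega) a ha3 (Or.inl hlt)]
        have hcmp := compat a (r'' + 1 + 1) (by omega) (by omega)
          (fne _ (by omega) (by omega)) (fne _ (by omega) (by omega))
        simp only [Nat.add_sub_cancel] at hcmp
        rw [hcmp]
        rw [inv_mul_cancel, hs'_one, mul_one]
      · -- a ≥ r' + 1
        rcases Nat.lt_or_ge (r' + 1) a with hgt2 | hge2
        · -- a > r' + 1
          obtain ⟨a', rfl⟩ : ∃ a', a = a' + 1 := ⟨a - 1, by omega⟩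
          rw [I4 a' r' (by omega) (by omega)]
          rw [hd'_mul, hd'_inv]
          rw [← I5 (r' + 1) a' (by omega) (by omega)]
          rw [ih (by omega) (a' + 1) ha3 (Or.inr (by omega))]
          have hcmp := compat (r' + 1) (a' + 1) (by omega) (by omega)
            (fne _ (by omega) (by omega)) (fne _ (by omega) (by omega))
          simp only [Nat.add_sub_cancel] at hcmp
          rw [hcmp]
          rw [inv_mul_cancel, hs'_one, mul_one]
        · -- a = r' + 1
          have : a = r' + 1 := by omega
          subst this
          rw [I2 r' (by omega)]
          rw [mul_inv_cancel_left]
  refine ⟨phase2 l iv d s x (phase1 l iv hiv d s x iv) (l + 2 - iv), ?_⟩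
  intro j hj
  have hji : j.1 ≠ iv := fun h => hj (Fin.ext h)
  have := claim2 (l + 2 - iv) le_rfl j.1 j.2 (by omega)
  simpa using this

open SimplexCategory Opposite

theorem assemble {Y : Type u} (GG : SimplicialGroupOver Y) (m : ℕ) (i : Fin (m + 2))
    (f : (Λ[m+1, i] : SSet.{u}) ⟶ GG.G) (g : Δ[m+1] ⟶ (Functor.const SimplexCategoryᵒᵖ).obj Y)
    (sq : CommSq f ((SSet.horn.{u} (m+1) i).ι) GG.p g)
    (y : Y)
    (gconst : ∀ (k : SimplexCategoryᵒᵖ) (a : Δ[m+1].obj k), g.app k a = y)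
    (z : Fib GG y (op (SimplexCategory.mk (m+1))))
    (hz : ∀ (j : Fin (m+2)) (hj : j ≠ i),
      GG.G.map (δ j).op z.1 = f.app (op (SimplexCategory.mk m)) (horn.face i j hj)) :
    sq.HasLift := by
  refine CommSq.HasLift.mk ⟨(SSet.yonedaEquiv (X := GG.G) (n := SimplexCategory.mk (m+1))).symm z.1, ?_, ?_⟩
  · -- fac_left
    apply horn.hom_ext
    intro j hj
    have : ((SSet.horn (m+1) i).ι ≫
        (SSet.yonedaEquiv (X := GG.G) (n := SimplexCategory.mk (m+1))).symm z.1).app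
          (op (SimplexCategory.mk m)) (horn.face i j hj) =
        GG.G.map (δ j).op z.1 := rfl
    rw [this, hz j hj]
  · -- fac_right
    ext k a
    have h1 : ((SSet.yonedaEquiv (X := GG.G) (n := SimplexCategory.mk (m+1))).symm z.1).app k a =
        (fmap GG y (a.down).op z).1 := rfl
    show GG.p.app k (((SSet.yonedaEquiv (X := GG.G) (n := SimplexCategory.mk (m+1))).symm z.1).app k a) =
      g.app k a
    rw [h1, (fmap GG y (a.down).op z).2, gconst k a]

end MooreKan

open SimplexCategory Opposite MooreKan

/-- For any group object `G` in simplicial sets over a constant (discrete) simplicial set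
`Y`, the structure map `p : G ⟶ Y` is a Kan fibration, i.e. it has the right lifting
property with respect to all horn inclusions `Λ[n, i] ⟶ Δ[n]`, `n ≥ 1`. -/
theorem simplicial_group_over_discrete_isKanFibration
    (Y : Type u) (GG : SimplicialGroupOver Y) (n : ℕ) (hn : 0 < n) (i : Fin (n + 1)) :
    HasLiftingProperty (SSet.horn.{u} n i).ι GG.p := by
  obtain ⟨m, rfl⟩ : ∃ m, n = m + 1 := ⟨n - 1, by omega⟩
  constructor
  intro f g sq
  classical
  obtain ⟨y, gconst⟩ : ∃ y : Y, ∀ (k : SimplexCategoryᵒᵖ) (a : (Δ[m+1] : SSet.{u}).obj k),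
      g.app k a = y := by
    refine ⟨g.app (op (SimplexCategory.mk (m+1))) (SSet.yonedaEquiv (𝟙 (stdSimplex.obj (SimplexCategory.mk (m+1))))), ?_⟩
    intro k a
    have h1 : (Δ[m+1] : SSet.{u}).map ((stdSimplex.objEquiv a).op)
        (SSet.yonedaEquiv (𝟙 (stdSimplex.obj (SimplexCategory.mk (m+1))))) = a := by
      rw [stdSimplex.map_apply, show stdSimplex.objEquiv (SSet.yonedaEquiv (𝟙 (stdSimplex.obj (SimplexCategory.mk (m+1))))) = 𝟙 (SimplexCategory.mk (m+1)) from rfl, Category.comp_id]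
      exact (stdSimplex.objEquiv).symm_apply_apply a
    have h2 := ConcreteCategory.congr_hom (g.naturality ((stdSimplex.objEquiv a).op))
      (SSet.yonedaEquiv (𝟙 (stdSimplex.obj (SimplexCategory.mk (m+1)))))
    simp only [types_comp_apply, Functor.const_obj_map, types_id_apply] at h2
    rw [← h1]
    exact h2
  have ffib : ∀ (k : SimplexCategoryᵒᵖ) (a : (Λ[m+1, i] : SSet.{u}).obj k),
      GG.p.app k (f.app k a) = y := by
    intro k a
    have h := ConcreteCategory.congr_hom (NatTrans.congr_app sq.w k) a
    simp only [NatTrans.comp_app, types_comp_apply] at h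
    exact h.trans (gconst k a.1)
  have fnat : ∀ {k k' : SimplexCategoryᵒᵖ} (φ : k ⟶ k') (a : (Λ[m+1, i] : SSet.{u}).obj k),
      GG.G.map φ (f.app k a) = f.app k' ((Λ[m+1, i] : SSet.{u}).map φ a) :=
    fun φ a => (ConcreteCategory.congr_hom (f.naturality φ) a).symm
  have key : ∃ z : Fib GG y (op (SimplexCategory.mk (m+1))),
      ∀ (j : Fin (m+2)) (hj : j ≠ i),
        fmap GG y (δ j).op z =
          ⟨f.app (op (SimplexCategory.mk m)) (horn.face i j hj),
            ffib (op (SimplexCategory.mk m)) (horn.face i j hj)⟩ := by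
    obtain _ | l := m
    · -- m = 0 : horn Λ[1, i]
      have hi2 := i.2
      refine ⟨fmap GG y (σ (0 : Fin 1)).op
        ⟨f.app (op (SimplexCategory.mk 0))
            (horn.face i ⟨1 - i.1, by omega⟩ (Fin.ne_of_val_ne (show 1 - i.1 ≠ i.1 by omega))),
          ffib _ _⟩, ?_⟩
      intro j hj
      have hj0 : j = ⟨1 - i.1, by omega⟩ := by
        apply Fin.ext
        have h2 := j.2
        have h3 := Fin.val_ne_of_ne hj
        show j.1 = 1 - i.1
        omega
      subst hj0
      have hcomp : ∀ (c : Fin 2), δ c ≫ σ (0 : Fin 1) = 𝟙 (SimplexCategory.mk 0) := by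
        intro c
        fin_cases c
        · exact δ_comp_σ_self' rfl
        · exact δ_comp_σ_succ' rfl
      erw [fmap_fmap, ← op_comp, hcomp, op_id, fmap_id]
    · -- m = l + 1 : use the Moore construction
      set xt : Fin (l+3) → Fib GG y (op (SimplexCategory.mk (l+1))) :=
        fun j => if hj : j ≠ i then
          ⟨f.app (op (SimplexCategory.mk (l+1))) (horn.face i j hj),
            ffib (op (SimplexCategory.mk (l+1))) (horn.face i j hj)⟩ else 1 with hxt
      have I1 : ∀ (a : ℕ) (h : a < l + 2) (u : Fib GG y (op (SimplexCategory.mk (l+1)))),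
          fmap GG y (δ (⟨a, by omega⟩ : Fin (l+3))).op
            (fmap GG y (σ (⟨a, h⟩ : Fin (l+2))).op u) = u := by
        intro a h u
        rw [fmap_fmap, ← op_comp, δ_comp_σ_self' (j := ⟨a, by omega⟩) (i := ⟨a, h⟩) rfl, op_id, fmap_id]
      have I2 : ∀ (a : ℕ) (h : a < l + 2) (u : Fib GG y (op (SimplexCategory.mk (l+1)))),
          fmap GG y (δ (⟨a + 1, by omega⟩ : Fin (l+3))).op
            (fmap GG y (σ (⟨a, h⟩ : Fin (l+2))).op u) = u := by
        intro a h u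
        rw [fmap_fmap, ← op_comp, δ_comp_σ_succ' (j := ⟨a + 1, by omega⟩) (i := ⟨a, h⟩) rfl, op_id, fmap_id]
      have I3 : ∀ (a b : ℕ) (hab : a ≤ b) (hb : b < l + 1)
          (u : Fib GG y (op (SimplexCategory.mk (l+1)))),
          fmap GG y (δ (⟨a, by omega⟩ : Fin (l+3))).op
              (fmap GG y (σ (⟨b + 1, by omega⟩ : Fin (l+2))).op u) =
            fmap GG y (σ (⟨b, hb⟩ : Fin (l+1))).op
              (fmap GG y (δ (⟨a, by omega⟩ : Fin (l+2))).op u) := by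
        intro a b hab hb u
        rw [fmap_fmap, ← op_comp,
          show δ (⟨a, by omega⟩ : Fin (l+3)) ≫ σ (⟨b + 1, by omega⟩ : Fin (l+2)) =
              σ (⟨b, hb⟩ : Fin (l+1)) ≫ δ (⟨a, by omega⟩ : Fin (l+2)) from
            δ_comp_σ_of_le (i := ⟨a, by omega⟩) (j := ⟨b, hb⟩) (by
              simp only [Fin.mk_le_mk, Fin.castSucc_mk]; omega),
          op_comp, ← fmap_fmap]
      have I4 : ∀ (a b : ℕ) (hba : b < a) (ha : a < l + 2)
          (u : Fib GG y (op (SimplexCategory.mk (l+1)))),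
          fmap GG y (δ (⟨a + 1, by omega⟩ : Fin (l+3))).op
              (fmap GG y (σ (⟨b, by omega⟩ : Fin (l+2))).op u) =
            fmap GG y (σ (⟨b, by omega⟩ : Fin (l+1))).op
              (fmap GG y (δ (⟨a, ha⟩ : Fin (l+2))).op u) := by
        intro a b hba ha u
        rw [fmap_fmap, ← op_comp,
          show δ (⟨a + 1, by omega⟩ : Fin (l+3)) ≫ σ (⟨b, by omega⟩ : Fin (l+2)) =
              σ (⟨b, by omega⟩ : Fin (l+1)) ≫ δ (⟨a, ha⟩ : Fin (l+2)) from
            δ_comp_σ_of_gt (i := ⟨a, ha⟩) (j := ⟨b, by omega⟩) (by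
              simp only [Fin.lt_def, Fin.castSucc_mk]; omega),
          op_comp, ← fmap_fmap]
      have I5 : ∀ (a b : ℕ) (hab : a ≤ b) (hb : b < l + 2)
          (z : Fib GG y (op (SimplexCategory.mk (l+2)))),
          fmap GG y (δ (⟨a, by omega⟩ : Fin (l+2))).op
              (fmap GG y (δ (⟨b + 1, by omega⟩ : Fin (l+3))).op z) =
            fmap GG y (δ (⟨b, hb⟩ : Fin (l+2))).op
              (fmap GG y (δ (⟨a, by omega⟩ : Fin (l+3))).op z) := by
        intro a b hab hb z
        rw [fmap_fmap, ← op_comp,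
          show δ (⟨a, by omega⟩ : Fin (l+2)) ≫ δ (⟨b + 1, by omega⟩ : Fin (l+3)) =
              δ (⟨b, hb⟩ : Fin (l+2)) ≫ δ (⟨a, by omega⟩ : Fin (l+3)) from
            δ_comp_δ (i := ⟨a, by omega⟩) (j := ⟨b, hb⟩) (by
              simp only [Fin.mk_le_mk]; omega),
          op_comp, ← fmap_fmap]
      have compat : ∀ (a b : ℕ) (hab : a < b) (hb : b < l + 3),
          (⟨a, by omega⟩ : Fin (l+3)) ≠ i → (⟨b, hb⟩ : Fin (l+3)) ≠ i →
          fmap GG y (δ (⟨a, by omega⟩ : Fin (l+2))).op (xt ⟨b, hb⟩) =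
            fmap GG y (δ (⟨b - 1, by omega⟩ : Fin (l+2))).op (xt ⟨a, by omega⟩) := by
        intro a b hab hb hna hnb
        have hb1 : b - 1 + 1 = b := by omega
        have hdd : δ (⟨a, by omega⟩ : Fin (l+2)) ≫ δ (⟨b, by omega⟩ : Fin (l+3)) =
            δ (⟨b - 1, by omega⟩ : Fin (l+2)) ≫ δ (⟨a, by omega⟩ : Fin (l+3)) := by
          have h := δ_comp_δ (n := l) (i := ⟨a, by omega⟩) (j := ⟨b - 1, by omega⟩)
            (by simp only [Fin.mk_le_mk]; omega)
          simp only [Fin.succ_mk, Fin.castSucc_mk, hb1] at h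
          exact h
        have hmapface : ∀ (c : Fin (l+2)) (j : Fin (l+3)) (hj : j ≠ i),
            ((Λ[l+2, i] : SSet.{u}).map (δ c).op (horn.face i j hj)).1 =
              (stdSimplex.objEquiv).symm (δ c ≫ δ j) := by
          intro c j hj
          show (Δ[l+2] : SSet.{u}).map (δ c).op
              ((stdSimplex.objEquiv).symm (δ j)) = _
          rfl
        have hfaces : (Λ[l+2, i] : SSet.{u}).map (δ (⟨a, by omega⟩ : Fin (l+2))).op
              (horn.face i ⟨b, hb⟩ hnb) =
            (Λ[l+2, i] : SSet.{u}).map (δ (⟨b - 1, by omega⟩ : Fin (l+2))).op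
              (horn.face i ⟨a, by omega⟩ hna) := by
          apply Subtype.ext
          rw [hmapface, hmapface, hdd]
        simp only [hxt]
        erw [dif_pos hna, dif_pos hnb]
        apply Subtype.ext
        show GG.G.map (δ (⟨a, by omega⟩ : Fin (l+2))).op
            (f.app (op (SimplexCategory.mk (l+1))) (horn.face i ⟨b, hb⟩ hnb)) =
          GG.G.map (δ (⟨b - 1, by omega⟩ : Fin (l+2))).op
            (f.app (op (SimplexCategory.mk (l+1))) (horn.face i ⟨a, by omega⟩ hna))
        rw [fnat, fnat, hfaces]
      obtain ⟨z, hz⟩ := moore_filler l i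
        (fun j => fmap GG y (δ j).op) (fun c => fmap GG y (σ c).op)
        (fun c => fmap GG y (δ c).op) (fun c => fmap GG y (σ c).op)
        (fun j a b => fmap_mul _ _ _) (fun j a b => fmap_mul _ _ _)
        (fun j a => fmap_inv _ _) (fun j => fmap_one _)
        I1 I2 I3 I4 I5 xt compat
      refine ⟨z, fun j hj => ?_⟩
      have h := hz j hj
      rw [hxt] at h
      beta_reduce at h
      erw [dif_pos hj] at h
      exact h
  obtain ⟨z, hz⟩ := key
  exact assemble GG m i f g sq y gconst z
    (fun j hj => congrArg Subtype.val (hz j hj))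
end

section
/- Let X be a simplicial object in a complete and cocomplete category 𝒞 and let K be a simplicial set. Then there is a natural isomorphism M_K(Dec₀X) ≅ M_{CK}X, where CK is the cone on K (i.e. σ!(K □ Δ⁰)). -/
open CategoryTheory Simplicial

/-- The "shift" functor `Δ → Δ`, `[n] ↦ [n+1]`, sending an order map `α` to its extension
fixing the (new) last vertex.  Restriction along its opposite is the décalage functor
`Dec₀` (which strips off the last face and degeneracy at each level). -/
def shiftFun : SimplexCategory ⥤ SimplexCategory where
  obj x := SimplexCategory.mk (x.len + 1)
  map {x y} f := SimplexCategory.Hom.mk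
    ⟨Fin.snoc (fun i => (f.toOrderHom i).castSucc) (Fin.last _), by
      intro i j hij
      rcases Fin.eq_castSucc_or_eq_last j with ⟨j', rfl⟩ | rfl
      · rcases Fin.eq_castSucc_or_eq_last i with ⟨i', rfl⟩ | rfl
        · simpa [Fin.snoc_castSucc, Fin.castSucc_le_castSucc_iff] using
            f.toOrderHom.monotone (by simpa using hij)
        · exact absurd hij (Fin.castSucc_lt_last j').not_ge
      · simp only [Fin.snoc_last]
        exact Fin.le_last _⟩
  map_id x := by
    apply SimplexCategory.Hom.ext
    ext i
    rcases Fin.eq_castSucc_or_eq_last i with ⟨i', rfl⟩ | rfl <;>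
      simp [SimplexCategory.Hom.id]
  map_comp {x y z} f g := by
    apply SimplexCategory.Hom.ext
    ext i
    rcases Fin.eq_castSucc_or_eq_last i with ⟨i', rfl⟩ | rfl <;>
      simp [SimplexCategory.Hom.comp, SimplexCategory.Hom.toOrderHom_mk]
    all_goals (simp only [DFunLike.coe]; simp)

open CategoryTheory.Limits Opposite

universe v u

variable {C : Type u} [Category.{v} C]

/-- The décalage functor `Dec₀ : sSet ⥤ sSet`, restriction along the shift `[n] ↦ [n+1]`. -/
def Dec0SSet : SSet.{0} ⥤ SSet.{0} :=
  (CategoryTheory.Functor.whiskeringLeft _ _ (Type 0)).obj shiftFun.op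

/-- The décalage functor `Dec₀ : s𝒞 ⥤ s𝒞` on simplicial objects in `𝒞`. -/
def Dec0C (C : Type u) [Category.{v} C] :
    (SimplexCategoryᵒᵖ ⥤ C) ⥤ (SimplexCategoryᵒᵖ ⥤ C) :=
  (CategoryTheory.Functor.whiskeringLeft _ _ C).obj shiftFun.op

/-- The generalized matching object functor `M_K : s𝒞 ⥤ 𝒞`, `M_K X = lim_{Δⁿ → K} Xₙ`,
realized as the limit over the category of elements of `K`. -/
noncomputable def matchingFunctor (K : SSet.{0}) [HasLimitsOfSize.{0,0} C] :
    (SimplexCategoryᵒᵖ ⥤ C) ⥤ C :=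
  (Functor.whiskeringLeft K.Elements SimplexCategoryᵒᵖ C).obj (CategoryOfElements.π K) ⋙ lim

namespace MatchingDec0Aux

/-- push elements of `G ⋙ L` to elements of `L`. -/
@[simps]
def elemComp {A B : Type*} [Category A] [Category B] (G : A ⥤ B) (L : B ⥤ Type w) :
    (G ⋙ L).Elements ⥤ L.Elements where
  obj e := ⟨G.obj e.1, e.2⟩
  map {e e'} g := ⟨G.map g.1, g.2⟩
  map_id e := by apply CategoryOfElements.ext; simp; rfl
  map_comp f g := by apply CategoryOfElements.ext; simp; rfl

variable (Cn : SSet.{0} ⥤ SSet.{0}) (adj : Cn ⊣ Dec0SSet) (K : SSet.{0})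

/-- The unit-induced functor on categories of elements. -/
def phi : K.Elements ⥤ (Cn.obj K).Elements :=
  NatTrans.mapElements (show K ⟶ shiftFun.op ⋙ Cn.obj K from adj.unit.app K) ⋙ elemComp shiftFun.op (Cn.obj K)

theorem phi_initial : (phi Cn adj K).Initial := by
  constructor
  rintro ⟨d, y⟩
  change IsConnected (CostructuredArrow (phi Cn adj K) ((Cn.obj K).elementsMk d y))
  let u := shiftFun.op
  let L := Cn.obj K
  let η : K ⟶ u ⋙ L := (show K ⟶ shiftFun.op ⋙ Cn.obj K from adj.unit.app K)
  -- `L` together with `η` is a pointwise left Kan extension of `K` along `u`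
  let E : Functor.LeftExtension u K := Functor.LeftExtension.mk L η
  have hE : E.IsPointwiseLeftKanExtension := by
    have hE' := Functor.isPointwiseLeftKanExtensionLeftKanExtensionUnit u K
    refine (Functor.LeftExtension.isPointwiseLeftKanExtensionEquivOfIso ?_) hE'
    refine StructuredArrow.isoMk
      (((u.lanAdjunction (Type 0)).leftAdjointUniq adj).app K) ?_
    have h := Adjunction.unit_leftAdjointUniq_hom_app (u.lanAdjunction (Type 0)) adj K
    rw [Functor.lanAdjunction_unit] at h
    exact h
  have hd : IsColimit (E.coconeAt d) := hE d
  let D := CostructuredArrow.proj u d ⋙ K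
  have hι : ∀ (j : CostructuredArrow u d) (x : K.obj j.left),
      (E.coconeAt d).ι.app j x = L.map j.hom (η.app j.left x) := fun _ _ => rfl
  -- the object of the costructured-arrow category associated to a pair
  let Θ : ∀ (j : CostructuredArrow u d) (x : K.obj j.left),
      L.map j.hom (η.app j.left x) = y → CostructuredArrow (phi Cn adj K) ((Cn.obj K).elementsMk d y) :=
    fun j x h => CostructuredArrow.mk (S := phi Cn adj K) (T := (Cn.obj K).elementsMk d y)
      (Y := ⟨j.left, x⟩)
      (show (phi Cn adj K).obj ⟨j.left, x⟩ ⟶ (⟨d, y⟩ : L.Elements) from ⟨j.hom, h⟩)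
  -- nonemptiness
  have nonempty : Nonempty (CostructuredArrow (phi Cn adj K) ((Cn.obj K).elementsMk d y)) := by
    obtain ⟨j, x, hx⟩ := Types.jointly_surjective_of_isColimit hd y
    exact ⟨Θ j x ((hι j x).symm.trans hx)⟩
  -- values are constant along the colimit relation
  have val : ∀ p q : Σ j : CostructuredArrow u d, D.obj j,
      Relation.EqvGen (Functor.ColimitTypeRel D) p q →
      L.map p.1.hom (η.app p.1.left p.2) = L.map q.1.hom (η.app q.1.left q.2) := by
    intro p q h
    induction h with
    | rel p q r =>
      obtain ⟨f, hf⟩ := r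
      have hnat := FunctorToTypes.naturality η f.left p.2
      have hw : u.map f.left ≫ q.1.hom = p.1.hom := CostructuredArrow.w f
      dsimp [Functor.comp_map] at hnat
      rw [hf]
      show L.map p.1.hom (η.app p.1.left p.2) = L.map q.1.hom (η.app q.1.left (K.map f.left p.2))
      rw [hnat, ← hw, L.map_comp]
      rfl
    | refl p => rfl
    | symm p q _ ih => exact ih.symm
    | trans p q r _ _ ih₁ ih₂ => exact ih₁.trans ih₂
  -- zigzags between associated objects
  have zig : ∀ p q : Σ j : CostructuredArrow u d, D.obj j,
      Relation.EqvGen (Functor.ColimitTypeRel D) p q →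
      ∀ (hp : L.map p.1.hom (η.app p.1.left p.2) = y)
        (hq : L.map q.1.hom (η.app q.1.left q.2) = y),
        Zigzag (Θ p.1 p.2 hp) (Θ q.1 q.2 hq) := by
    intro p q h
    induction h with
    | rel p q r =>
      intro hp hq
      obtain ⟨f, hf⟩ := r
      refine Relation.ReflTransGen.single (Or.inl ⟨?_⟩)
      refine CostructuredArrow.homMk
        (CategoryOfElements.homMk (⟨p.1.left, p.2⟩ : K.Elements) ⟨q.1.left, q.2⟩
          f.left hf.symm) ?_
      apply CategoryOfElements.ext
      exact CostructuredArrow.w f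
    | refl p => intro hp hq; exact Zigzag.refl _
    | symm p q h ih => intro hp hq; exact (ih hq hp).symm
    | trans p q r h₁ h₂ ih₁ ih₂ =>
      intro hp hr
      have hq := (val p q h₁).symm.trans hp
      exact (ih₁ hp hq).trans (ih₂ hq hr)
  -- connectivity
  have : Nonempty (CostructuredArrow (phi Cn adj K) ((Cn.obj K).elementsMk d y)) := nonempty
  apply zigzag_isConnected
  intro A B
  let jA : CostructuredArrow u d := CostructuredArrow.mk (A.hom.1 : u.obj A.left.1 ⟶ d)
  let jB : CostructuredArrow u d := CostructuredArrow.mk (B.hom.1 : u.obj B.left.1 ⟶ d)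
  have hA : L.map jA.hom (η.app jA.left A.left.2) = y := A.hom.2
  have hB : L.map jB.hom (η.app jB.left B.left.2) = y := B.hom.2
  have eqv : Relation.EqvGen (Functor.ColimitTypeRel D) ⟨jA, A.left.2⟩ ⟨jB, B.left.2⟩ := by
    have hcolim := colimit.isColimit D
    have hAι : (E.coconeAt d).ι.app jA A.left.2 = y := (hι _ _).trans hA
    have hBι : (E.coconeAt d).ι.app jB B.left.2 = y := (hι _ _).trans hB
    have hinj : Function.Injective
        (IsColimit.coconePointUniqueUpToIso hcolim hd).hom := by
      intro a b hab
      have := types_congr_hom (IsColimit.coconePointUniqueUpToIso hcolim hd).hom_inv_id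
      dsimp at this
      rw [← this a, ← this b, hab]
    apply Types.colimit_eq (F := D)
    apply hinj
    have hcompA : (IsColimit.coconePointUniqueUpToIso hcolim hd).hom (colimit.ι D jA A.left.2) =
        (E.coconeAt d).ι.app jA A.left.2 := types_congr_hom
      (IsColimit.comp_coconePointUniqueUpToIso_hom hcolim hd jA) A.left.2
    have hcompB : (IsColimit.coconePointUniqueUpToIso hcolim hd).hom (colimit.ι D jB B.left.2) =
        (E.coconeAt d).ι.app jB B.left.2 := types_congr_hom
      (IsColimit.comp_coconePointUniqueUpToIso_hom hcolim hd jB) B.left.2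
    dsimp at hcompA hcompB
    rw [hcompA, hcompB]
    exact hAι.trans hBι.symm
  have hz := zig ⟨jA, A.left.2⟩ ⟨jB, B.left.2⟩ eqv hA hB
  have eA : A = Θ jA A.left.2 hA := CostructuredArrow.eq_mk A
  have eB : B = Θ jB B.left.2 hB := CostructuredArrow.eq_mk B
  rw [eA, eB]
  exact hz

end MatchingDec0Aux

/-- Let `X` be a simplicial object in a complete and cocomplete category `𝒞` and `K` a
simplicial set.  Then there is an isomorphism `M_K(Dec₀X) ≅ M_{CK}X`, natural in `X`,
where `C ⊣ Dec₀` is the cone functor (`CK = σ!(K □ Δ⁰)` is the cone on `K`). -/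
theorem matching_dec0_cone
    [HasLimitsOfSize.{0,0} C] [HasColimitsOfSize.{0,0} C]
    (Cn : SSet.{0} ⥤ SSet.{0}) (adj : Cn ⊣ Dec0SSet) (K : SSet.{0}) :
    Nonempty ((matchingFunctor (C := C) (Cn.obj K)) ≅
      Dec0C C ⋙ matchingFunctor (C := C) K) := by
  haveI : (MatchingDec0Aux.phi Cn adj K).Initial := MatchingDec0Aux.phi_initial Cn adj K
  refine ⟨NatIso.ofComponents
    (fun X => @asIso _ _ _ _ (limit.pre (CategoryOfElements.π (Cn.obj K) ⋙ X)
      (MatchingDec0Aux.phi Cn adj K)) (Functor.Initial.limit_pre_isIso _)) ?_⟩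
  intro X Y f
  exact limit.map_pre (Functor.whiskerLeft (CategoryOfElements.π (Cn.obj K)) f)
    (MatchingDec0Aux.phi Cn adj K)
end

section
/- Let 𝒞 be a category with finite limits, B an object of 𝒞, and X a simplicial object in 𝒞/B. Then the matching object of X computed in 𝒞/B agrees with the matching object of the underlying simplicial object computed in 𝒞: M^B_{Λⁿₖ}X = M_{Λⁿₖ}X for all 0 ≤ k ≤ n, n ≥ 1, and M^B_{∂Δⁿ}X = M_{∂Δⁿ}X for all n ≥ 2. -/
open CategoryTheory CategoryTheory.Limits Simplicial

universe v u

section Auxiliary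

open Opposite SSet

universe w u' v'

/-- The forgetful functor `Over B ⥤ C` preserves limits of shape `J` whenever `J` is
connected (with no existence assumptions on limits). -/
noncomputable def forgetPreservesConnected {J : Type u'} [Category.{v'} J] [IsConnected J]
    {C : Type u} [Category.{v} C] {B : C} (F : J ⥤ Over B) :
    PreservesLimit F (Over.forget B) where
  preserves {c} hc := by
    refine ⟨⟨fun s => (hc.lift (CostructuredArrow.CreatesConnected.raiseCone s)).left, ?_, ?_⟩⟩
    · intro s j
      exact congrArg CommaMorphism.left (hc.fac (CostructuredArrow.CreatesConnected.raiseCone s) j)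
    · intro s m hm
      have hw : m ≫ c.pt.hom = (CostructuredArrow.CreatesConnected.raiseCone s).pt.hom := by
        have h1 : (c.π.app (Classical.arbitrary J)).left ≫ (F.obj (Classical.arbitrary J)).hom
            = c.pt.hom := Over.w (c.π.app (Classical.arbitrary J))
        dsimp [CostructuredArrow.CreatesConnected.raiseCone]
        rw [← h1]
        exact (Category.assoc (m : s.pt ⟶ c.pt.left) _ _).symm.trans (congrArg (· ≫ (F.obj (Classical.arbitrary J)).hom) (hm _))
      have := hc.uniq (CostructuredArrow.CreatesConnected.raiseCone s) (Over.homMk m hw) ?_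
      · exact congrArg CommaMorphism.left this
      · intro j
        ext
        exact hm j

/-- Precomposing a simplex of `Δ[n]` with a constant map `⦋0⦌ ⟶ [m]` yields the
corresponding vertex. -/
lemma map_const_eq {n : ℕ} {m : SimplexCategory} (s : Δ[n].obj (op m)) (i : Fin (m.len + 1)) :
    Δ[n].map (SimplexCategory.const ⦋0⦌ m i).op s
      = SSet.stdSimplex.const n (SSet.stdSimplex.asOrderHom s i) (op ⦋0⦌) := rfl

/-- The category of elements of the horn `Λ[n, k]` is connected when `n ≥ 1`. -/
lemma horn_connected (n : ℕ) (hn : 1 ≤ n) (k : Fin (n + 1)) :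
    IsConnected (SSet.horn.{w} n k).toSSet.Elements := by
  have hnt : Nontrivial (Fin (n + 1)) := by
    obtain ⟨m, rfl⟩ : ∃ m, n = m + 1 := ⟨n - 1, by omega⟩
    infer_instance
  have hbase : Set.range (SSet.stdSimplex.asOrderHom
      ((SSet.stdSimplex.const n k (op ⦋0⦌)) : Δ[n].obj (op ⦋0⦌))) ∪ {k} ≠ Set.univ := by
    intro h
    obtain ⟨j, hj⟩ := exists_ne k
    rcases Set.eq_univ_iff_forall.mp h j with h1 | h1
    · obtain ⟨i, hi⟩ := h1
      exact hj hi.symm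
    · exact hj h1
  let bE : (SSet.horn.{w} n k).toSSet.Elements := ⟨op ⦋0⦌, ⟨_, hbase⟩⟩
  have hne : Nonempty (SSet.horn.{w} n k).toSSet.Elements := ⟨bE⟩
  have key : ∀ e : (SSet.horn.{w} n k).toSSet.Elements, Zigzag e bE := by
    rintro ⟨m, s⟩
    have hE : ∀ (a b : Fin (n+1)) (hab : a ≤ b),
        (a = SSet.stdSimplex.asOrderHom s.1 0 ∨ a = k) → (b = SSet.stdSimplex.asOrderHom s.1 0 ∨ b = k) →
        Set.range (SSet.stdSimplex.asOrderHom (SSet.stdSimplex.edge n a b hab)) ∪ {k}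
          ≠ Set.univ := by
      intro a b hab ha hb h
      apply s.2
      rw [Set.eq_univ_iff_forall] at h ⊢
      intro x
      rcases h x with ⟨i, hi⟩ | hx
      · have hx' : x = a ∨ x = b := by
          fin_cases i
          · exact Or.inl hi.symm
          · exact Or.inr hi.symm
        rcases hx' with rfl | rfl
        · rcases ha with rfl | rfl
          · exact Or.inl ⟨0, rfl⟩
          · exact Or.inr rfl
        · rcases hb with rfl | rfl
          · exact Or.inl ⟨0, rfl⟩
          · exact Or.inr rfl
      · exact Or.inr hx
    let vE : (SSet.horn.{w} n k).toSSet.Elements :=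
      ⟨op ⦋0⦌, (SSet.horn n k).toSSet.map (SimplexCategory.const ⦋0⦌ m.unop 0).op s⟩
    have step1 : Zigzag ((SSet.horn.{w} n k).toSSet.elementsMk m s) vE :=
      Relation.ReflTransGen.single
        (Or.inl ⟨CategoryOfElements.homMk _ vE (SimplexCategory.const ⦋0⦌ m.unop 0).op rfl⟩)
    rcases le_total (SSet.stdSimplex.asOrderHom s.1 0) k with hjk | hjk
    · let eE : (SSet.horn.{w} n k).toSSet.Elements :=
        ⟨op ⦋1⦌, ⟨SSet.stdSimplex.edge n _ k hjk, hE _ k hjk (Or.inl rfl) (Or.inr rfl)⟩⟩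
      have hA : (SSet.horn.{w} n k).toSSet.elementsMk (op ⦋0⦌) ((SSet.horn n k).toSSet.map (SimplexCategory.const ⦋0⦌ ⦋1⦌ 0).op eE.2) = vE :=
        congrArg ((SSet.horn.{w} n k).toSSet.elementsMk (op ⦋0⦌))
          (Subtype.ext ((map_const_eq _ 0).trans (map_const_eq s.1 0).symm))
      have hB : (SSet.horn.{w} n k).toSSet.elementsMk (op ⦋0⦌) ((SSet.horn n k).toSSet.map (SimplexCategory.const ⦋0⦌ ⦋1⦌ 1).op eE.2) = bE :=
        congrArg ((SSet.horn.{w} n k).toSSet.elementsMk (op ⦋0⦌))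
          (Subtype.ext (map_const_eq _ 1))
      have hom1 : eE ⟶ vE := hA ▸ CategoryOfElements.homMk eE _ (SimplexCategory.const ⦋0⦌ ⦋1⦌ 0).op rfl
      have hom2 : eE ⟶ bE := hB ▸ CategoryOfElements.homMk eE _ (SimplexCategory.const ⦋0⦌ ⦋1⦌ 1).op rfl
      exact step1.trans (Relation.ReflTransGen.head (Or.inr ⟨hom1⟩)
        (Relation.ReflTransGen.single (Or.inl ⟨hom2⟩)))
    · let eE : (SSet.horn.{w} n k).toSSet.Elements :=
        ⟨op ⦋1⦌, ⟨SSet.stdSimplex.edge n k _ hjk, hE k _ hjk (Or.inr rfl) (Or.inl rfl)⟩⟩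
      have hA : (SSet.horn.{w} n k).toSSet.elementsMk (op ⦋0⦌) ((SSet.horn n k).toSSet.map (SimplexCategory.const ⦋0⦌ ⦋1⦌ 1).op eE.2) = vE :=
        congrArg ((SSet.horn.{w} n k).toSSet.elementsMk (op ⦋0⦌))
          (Subtype.ext ((map_const_eq _ 1).trans (map_const_eq s.1 0).symm))
      have hB : (SSet.horn.{w} n k).toSSet.elementsMk (op ⦋0⦌) ((SSet.horn n k).toSSet.map (SimplexCategory.const ⦋0⦌ ⦋1⦌ 0).op eE.2) = bE :=
        congrArg ((SSet.horn.{w} n k).toSSet.elementsMk (op ⦋0⦌))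
          (Subtype.ext (map_const_eq _ 0))
      have hom1 : eE ⟶ vE := hA ▸ CategoryOfElements.homMk eE _ (SimplexCategory.const ⦋0⦌ ⦋1⦌ 1).op rfl
      have hom2 : eE ⟶ bE := hB ▸ CategoryOfElements.homMk eE _ (SimplexCategory.const ⦋0⦌ ⦋1⦌ 0).op rfl
      exact step1.trans (Relation.ReflTransGen.head (Or.inr ⟨hom1⟩)
        (Relation.ReflTransGen.single (Or.inl ⟨hom2⟩)))
  exact zigzag_isConnected fun e₁ e₂ => (key e₁).trans (key e₂).symm

/-- The category of elements of the boundary `∂Δ[n]` is connected when `n ≥ 2`. -/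
lemma boundary_connected (n : ℕ) (hn : 2 ≤ n) :
    IsConnected (SSet.boundary.{w} n).toSSet.Elements := by
  have hvert : ∀ j : Fin (n + 1),
      ¬ Function.Surjective (SSet.stdSimplex.asOrderHom
        ((SSet.stdSimplex.const n j (op ⦋0⦌)) : Δ[n].obj (op ⦋0⦌))) := by
    intro j h
    have := Fintype.card_le_of_surjective _ h
    simp [SimplexCategory.len] at this
    omega
  have hedge : ∀ (j : Fin (n + 1)),
      ¬ Function.Surjective (SSet.stdSimplex.asOrderHom
        (SSet.stdSimplex.edge n 0 j (Fin.zero_le j))) := by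
    intro j h
    have := Fintype.card_le_of_surjective _ h
    simp [SimplexCategory.len] at this
    omega
  let bE : (SSet.boundary.{w} n).toSSet.Elements := ⟨op ⦋0⦌, ⟨_, hvert 0⟩⟩
  have hne : Nonempty (SSet.boundary.{w} n).toSSet.Elements := ⟨bE⟩
  have key : ∀ e : (SSet.boundary.{w} n).toSSet.Elements, Zigzag e bE := by
    rintro ⟨m, s⟩
    let vE : (SSet.boundary.{w} n).toSSet.Elements :=
      ⟨op ⦋0⦌, (SSet.boundary n).toSSet.map (SimplexCategory.const ⦋0⦌ m.unop 0).op s⟩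
    have step1 : Zigzag ((SSet.boundary.{w} n).toSSet.elementsMk m s) vE :=
      Relation.ReflTransGen.single
        (Or.inl ⟨CategoryOfElements.homMk _ vE (SimplexCategory.const ⦋0⦌ m.unop 0).op rfl⟩)
    let eE : (SSet.boundary.{w} n).toSSet.Elements :=
      ⟨op ⦋1⦌, ⟨SSet.stdSimplex.edge n 0 (SSet.stdSimplex.asOrderHom s.1 0) (Fin.zero_le _),
        hedge _⟩⟩
    have hA : (SSet.boundary.{w} n).toSSet.elementsMk (op ⦋0⦌)
        ((SSet.boundary n).toSSet.map (SimplexCategory.const ⦋0⦌ ⦋1⦌ 1).op eE.2) = vE :=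
      congrArg ((SSet.boundary.{w} n).toSSet.elementsMk (op ⦋0⦌))
        (Subtype.ext ((map_const_eq _ 1).trans (map_const_eq s.1 0).symm))
    have hB : (SSet.boundary.{w} n).toSSet.elementsMk (op ⦋0⦌)
        ((SSet.boundary n).toSSet.map (SimplexCategory.const ⦋0⦌ ⦋1⦌ 0).op eE.2) = bE :=
      congrArg ((SSet.boundary.{w} n).toSSet.elementsMk (op ⦋0⦌))
        (Subtype.ext (map_const_eq _ 0))
    have hom1 : eE ⟶ vE := hA ▸ CategoryOfElements.homMk eE _ (SimplexCategory.const ⦋0⦌ ⦋1⦌ 1).op rfl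
    have hom2 : eE ⟶ bE := hB ▸ CategoryOfElements.homMk eE _ (SimplexCategory.const ⦋0⦌ ⦋1⦌ 0).op rfl
    exact step1.trans (Relation.ReflTransGen.head (Or.inr ⟨hom1⟩)
      (Relation.ReflTransGen.single (Or.inl ⟨hom2⟩)))
  exact zigzag_isConnected fun e₁ e₂ => (key e₁).trans (key e₂).symm

end Auxiliary

/-- Let `𝒞` be a category with finite limits, `B` an object of `𝒞` and `X` a simplicial
object in `𝒞/B`.  Then the matching objects of `X` computed in `𝒞/B` agree with the
matching objects of the underlying simplicial object computed in `𝒞`: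
`M^B_{Λⁿₖ}X = M_{Λⁿₖ}X` for `n ≥ 1`, `0 ≤ k ≤ n` and `M^B_{∂Δⁿ}X = M_{∂Δⁿ}X` for `n ≥ 2`.
We realize the generalized matching object `M_K X` as the limit of
`X ∘ π : (Δ ↓ K)ᵒᵖ → 𝒞` over the category of elements of `K`; the statement is that the
forgetful functor `𝒞/B → 𝒞` preserves these limits. -/
theorem slice_matching_object_agrees
    {C : Type u} [Category.{v} C] [HasFiniteLimits C] (B : C)
    (X : SimplexCategoryᵒᵖ ⥤ Over B) :
    (∀ (n : ℕ), 1 ≤ n → ∀ (k : Fin (n + 1)),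
      Nonempty (PreservesLimit
        (CategoryOfElements.π (SSet.horn n k) ⋙ X) (Over.forget B))) ∧
    (∀ (n : ℕ), 2 ≤ n →
      Nonempty (PreservesLimit
        (CategoryOfElements.π (SSet.boundary n) ⋙ X) (Over.forget B))) := by
  constructor
  · intro n hn k
    have := horn_connected n hn k
    exact ⟨forgetPreservesConnected _⟩
  · intro n hn
    have := boundary_connected n hn
    exact ⟨forgetPreservesConnected _⟩
end

section
/- For 0 ≤ k < n, the horn Λⁿₖ decomposes as the pushout Λⁿₖ = C(Λ^{n−1}ₖ) ∪_{Λ^{n−1}ₖ} Δ^{n−1}, where C denotes the cone (join with Δ⁰). Equivalently, C(Λ^{n−1}ₖ) = ⋃_{i≠k, 0≤i≤n−1} dⁱ(Δ^{n−1}) inside Δⁿ, and adjoining the last face dⁿ(Δ^{n−1}) yields Λⁿₖ. -/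
open CategoryTheory

/-- For `0 ≤ k < n` the horn `Λⁿₖ` decomposes as
`Λⁿₖ = C(Λ^{n−1}ₖ) ∪_{Λ^{n−1}ₖ} Δ^{n−1}`, where the cone
`C(Λ^{n−1}ₖ) = ⋃_{i ≠ k, 0 ≤ i ≤ n−1} dⁱ(Δ^{n−1})` inside `Δⁿ` and `Δ^{n−1}` is included
as the last face `dⁿ(Δ^{n−1})`.  We state this levelwise: an `ℓ`-simplex of `Δⁿ` is a
monotone map `α : Fin (ℓ+1) →o Fin (n+1)`; it lies in `Λⁿₖ` iff some `j ≠ k` is omitted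
from its range, it lies in `dⁱ(Δ^{n−1})` iff `i` is omitted from its range.  The first
conjunct says `Λⁿₖ` is the union of the cone part and the last face; the second says the
intersection of the cone part with the last face is the copy `dⁿ(Λ^{n−1}ₖ)` of `Λ^{n−1}ₖ`. -/
theorem horn_cone_pushout_decomposition (n : ℕ) (k : Fin (n + 1)) (hk : (k : ℕ) < n)
    (ℓ : ℕ) (α : Fin (ℓ + 1) →o Fin (n + 1)) :
    ((∃ j : Fin (n + 1), j ≠ k ∧ j ∉ Set.range α) ↔
      ((∃ i : Fin (n + 1), i ≠ k ∧ i ≠ Fin.last n ∧ i ∉ Set.range α) ∨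
        Fin.last n ∉ Set.range α)) ∧
    (((∃ i : Fin (n + 1), i ≠ k ∧ i ≠ Fin.last n ∧ i ∉ Set.range α) ∧
        Fin.last n ∉ Set.range α) ↔
      (Fin.last n ∉ Set.range α ∧
        ∃ j : Fin n, j ≠ ⟨(k : ℕ), hk⟩ ∧ j.castSucc ∉ Set.range α)) := by
  have hlk : Fin.last n ≠ k := by
    intro h
    exact absurd hk (by simp [← h])
  constructor
  · constructor
    · rintro ⟨j, hj, hj'⟩
      by_cases h : j = Fin.last n
      · exact Or.inr (h ▸ hj')
      · exact Or.inl ⟨j, hj, h, hj'⟩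
    · rintro (⟨i, h1, _, h3⟩ | h)
      · exact ⟨i, h1, h3⟩
      · exact ⟨Fin.last n, hlk, h⟩
  · constructor
    · rintro ⟨⟨i, h1, h2, h3⟩, h4⟩
      refine ⟨h4, ⟨i, Fin.val_lt_last h2⟩, ?_, ?_⟩
      · intro h
        exact h1 (Fin.ext (by simpa using congrArg Fin.val h))
      · simpa [Fin.castSucc] using h3
    · rintro ⟨h4, j, h1, h2⟩
      refine ⟨⟨j.castSucc, ?_, ?_, h2⟩, h4⟩
      · intro h
        exact h1 (Fin.ext (show (j : ℕ) = k from congrArg Fin.val h))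
      · exact Fin.ne_of_lt (Fin.castSucc_lt_last j)
end

section
/- Let G be a simplicial group acting principally on a simplicial set P over X, i.e. P → X is a G-torsor: the action P × G → P is over X and the map P × G → P ×_X P, (p,g) ↦ (p, pg), is an isomorphism. If each Pₙ → Xₙ is surjective, then P → X is a Kan fibration. -/
open CategoryTheory SSet Simplicial

open Opposite SimplexCategory

universe u

private lemma finvalmk {n a : ℕ} (h : a < n) : ((⟨a, h⟩ : Fin n) : ℕ) = a := rfl

/-- Let `G` be a simplicial group acting principally (over `X`) on a simplicial set `P`,
i.e. `P → X` is a `G`-torsor: the action is simplicial and over `X`, and the shear map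
`P × G → P ×_X P` is an isomorphism (rendered: for any two simplices in the same fiber
there is a unique group element carrying one to the other).  If each `Pₙ → Xₙ` is
surjective, then `P → X` is a Kan fibration. -/
theorem torsor_isKanFibration
    (G : CategoryTheory.SimplicialObject GrpCat.{u}) (P X : SSet.{u}) (p : P ⟶ X)
    (a : ∀ m : SimplexCategoryᵒᵖ, P.obj m → ↑(G.obj m) → P.obj m)
    -- action axioms
    (ha_one : ∀ m x, a m x 1 = x)
    (ha_mul : ∀ m x g h, a m (a m x g) h = a m x (g * h))
    -- the action is simplicial
    (ha_map : ∀ {m m'} (f : m ⟶ m') x g, P.map f (a m x g) = a m' (P.map f x) (G.map f g))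
    -- the action is over `X`
    (ha_over : ∀ m x g, p.app m (a m x g) = p.app m x)
    -- principality: the shear map `P × G → P ×_X P` is an isomorphism
    (hprin : ∀ m (y z : P.obj m), p.app m y = p.app m z → ∃! g : ↑(G.obj m), a m y g = z)
    -- local triviality over sets: each `Pₙ → Xₙ` is onto
    (hsurj : ∀ m, Function.Surjective (p.app m)) :
    ∀ (n : ℕ), 0 < n → ∀ (i : Fin (n + 1)), HasLiftingProperty (SSet.horn.{u} n i).ι p := by
  rintro n hn i
  obtain ⟨m, rfl⟩ : ∃ m, n = m + 1 := ⟨n - 1, by omega⟩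
  constructor
  intro u v sq
  obtain ⟨x, hxdef⟩ :
      ∃ x', x' = (SSet.yonedaEquiv (X := X) (n := (⦋m + 1⦌ : SimplexCategory))) v := ⟨_, rfl⟩
  -- naturality of `v` on simplices of `Δ[m+1]`
  have hv : ∀ (k : SimplexCategoryᵒᵖ) (f : k.unop ⟶ (⦋m + 1⦌ : SimplexCategory)),
      v.app k (ULift.up f) = X.map f.op x := by
    intro k f
    rw [hxdef]
    have h := NatTrans.naturality_apply (C := SimplexCategoryᵒᵖ) v f.op (stdSimplex.objEquiv.symm (𝟙 (⦋m + 1⦌ : SimplexCategory)))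
    have h1 : (Δ[m + 1]).map f.op (stdSimplex.objEquiv.symm (𝟙 (⦋m + 1⦌ : SimplexCategory))) = ULift.up f := by
      show ULift.up (f.op.unop ≫ 𝟙 _) = ULift.up f
      rw [Category.comp_id]
      rfl
    rw [h1] at h
    exact h
  have hp' : ∀ {k k' : SimplexCategoryᵒᵖ} (f : k ⟶ k') (z : P.obj k),
      p.app k' (P.map f z) = X.map f (p.app k z) :=
    fun f z => NatTrans.naturality_apply (C := SimplexCategoryᵒᵖ) p f z
  -- the given horn maps to the right fibers
  have hpy : ∀ (j : Fin (m + 2)) (hj : j ≠ i),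
      p.app (op (⦋m⦌ : SimplexCategory)) (u.app _ (horn.face i j hj))
        = X.map (SimplexCategory.δ j).op x := by
    intro j hj
    have h := ConcreteCategory.congr_hom (NatTrans.congr_app sq.w (op (⦋m⦌ : SimplexCategory))) (horn.face i j hj)
    exact h.trans (hv _ (SimplexCategory.δ j))
  have hfib : ∀ (τ : P.obj (op (⦋m + 1⦌ : SimplexCategory))), p.app _ τ = x →
      ∀ (j : Fin (m + 2)) (hj : j ≠ i),
      p.app (op (⦋m⦌ : SimplexCategory)) (P.map (SimplexCategory.δ j).op τ)
        = p.app (op (⦋m⦌ : SimplexCategory)) (u.app _ (horn.face i j hj)) := by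
    intro τ hτ j hj
    rw [hp', hτ, hpy j hj]
  -- composition helpers
  have hPP : ∀ {k k' k'' : SimplexCategory} (f : k ⟶ k') (g : k' ⟶ k'') (τ : P.obj (op k'')),
      P.map (f ≫ g).op τ = P.map f.op (P.map g.op τ) := by
    intro k k' k'' f g τ
    rw [op_comp, FunctorToTypes.map_comp_apply]
  have hGG : ∀ {k k' k'' : SimplexCategory} (f : k ⟶ k') (g : k' ⟶ k'')
      (z : ↑(G.obj (op k''))),
      G.map (f ≫ g).op z = G.map f.op (G.map g.op z) := by
    intro k k' k'' f g z
    rw [op_comp, G.map_comp]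
    rfl
  -- compatibility of the horn faces
  have hcompat : ∀ (k : SimplexCategoryᵒᵖ) (f₁ f₂ : k.unop ⟶ (⦋m⦌ : SimplexCategory))
      (j₁ j₂ : Fin (m + 2)) (hj₁ : j₁ ≠ i) (hj₂ : j₂ ≠ i),
      f₁ ≫ SimplexCategory.δ j₁ = f₂ ≫ SimplexCategory.δ j₂ →
      P.map f₁.op (u.app _ (horn.face i j₁ hj₁))
        = P.map f₂.op (u.app _ (horn.face i j₂ hj₂)) := by
    intro k f₁ f₂ j₁ j₂ hj₁ hj₂ h
    rw [← FunctorToTypes.naturality, ← FunctorToTypes.naturality]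
    have heq : (Λ[m + 1, i] : SSet.{u}).map f₁.op (horn.face i j₁ hj₁)
        = (Λ[m + 1, i] : SSet.{u}).map f₂.op (horn.face i j₂ hj₂) := by
      apply Subtype.ext
      apply SSet.stdSimplex.objEquiv.injective
      show f₁ ≫ SimplexCategory.δ j₁ = f₂ ≫ SimplexCategory.δ j₂
      exact h
    rw [heq]
  -- an element of the structure group all whose relevant faces act trivially
  have htriv : ∀ (τ : P.obj (op (⦋m + 1⦌ : SimplexCategory))) (R : Fin (m + 2)) (hRi : R ≠ i)
      (g : ↑(G.obj (op (⦋m⦌ : SimplexCategory))))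
      (_ : a _ (P.map (SimplexCategory.δ R).op τ) g = u.app _ (horn.face i R hRi))
      (k : SimplexCategoryᵒᵖ) (f : k.unop ⟶ (⦋m⦌ : SimplexCategory)),
      P.map f.op (P.map (SimplexCategory.δ R).op τ)
        = P.map f.op (u.app _ (horn.face i R hRi)) →
      G.map f.op g = 1 := by
    intro τ R hRi g hg k f hf
    have h1 : a k (P.map f.op (P.map (SimplexCategory.δ R).op τ)) (G.map f.op g)
        = P.map f.op (P.map (SimplexCategory.δ R).op τ) := by
      rw [← ha_map, hg, hf]
    obtain ⟨g₀, hg₀, huniq⟩ := hprin k (P.map f.op (P.map (SimplexCategory.δ R).op τ))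
      (P.map f.op (P.map (SimplexCategory.δ R).op τ)) rfl
    exact (huniq _ h1).trans (huniq 1 (ha_one _ _)).symm
  -- the generic step: correcting one face does not disturb faces that are
  -- handled by suitable simplicial identities
  have facetriv : ∀ (τ : P.obj (op (⦋m + 1⦌ : SimplexCategory))) (R : Fin (m + 2)) (hRi : R ≠ i)
      (C : Fin (m + 1)) (g : ↑(G.obj (op (⦋m⦌ : SimplexCategory))))
      (_ : a _ (P.map (SimplexCategory.δ R).op τ) g = u.app _ (horn.face i R hRi))
      (j : Fin (m + 2)) (hj : j ≠ i)
      (_ : P.map (SimplexCategory.δ j).op τ = u.app _ (horn.face i j hj))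
      (k : SimplexCategory) (f : k ⟶ (⦋m⦌ : SimplexCategory))
      (s : (⦋m⦌ : SimplexCategory) ⟶ k) (e : k ⟶ (⦋m⦌ : SimplexCategory)),
      SimplexCategory.δ j ≫ SimplexCategory.σ C = s ≫ f →
      f ≫ SimplexCategory.δ R = e ≫ SimplexCategory.δ j →
      P.map (SimplexCategory.δ j).op (a _ τ (G.map (SimplexCategory.σ C).op g))
        = u.app _ (horn.face i j hj) := by
    intro τ R hRi C g hg j hj hdj k f s e E1 E2
    have hf1 : G.map f.op g = 1 := by
      refine htriv τ R hRi g hg (op k) f ?_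
      calc P.map f.op (P.map (SimplexCategory.δ R).op τ)
          = P.map (f ≫ SimplexCategory.δ R).op τ := (hPP _ _ _).symm
        _ = P.map (e ≫ SimplexCategory.δ j).op τ := by rw [E2]
        _ = P.map e.op (P.map (SimplexCategory.δ j).op τ) := hPP _ _ _
        _ = P.map e.op (u.app _ (horn.face i j hj)) := by rw [hdj]
        _ = P.map f.op (u.app _ (horn.face i R hRi)) := hcompat (op k) e f j R hj hRi E2.symm
    rw [ha_map]
    have h2 : G.map (SimplexCategory.δ j).op (G.map (SimplexCategory.σ C).op g)
        = G.map s.op (G.map f.op g) := by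
      calc G.map (SimplexCategory.δ j).op (G.map (SimplexCategory.σ C).op g)
          = G.map (SimplexCategory.δ j ≫ SimplexCategory.σ C).op g := (hGG _ _ _).symm
        _ = G.map (s ≫ f).op g := by rw [E1]
        _ = G.map s.op (G.map f.op g) := hGG _ _ _
    have h3 : G.map s.op (1 : ↑(G.obj (op k))) = 1 := map_one _
    rw [h2, hf1, h3, ha_one, hdj]
  -- phase 1: fill all faces below `i`, from the bottom up
  have phase1 : ∀ r : ℕ, r ≤ i.val →
      ∃ τ : P.obj (op (⦋m + 1⦌ : SimplexCategory)),
        p.app _ τ = x ∧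
        ∀ (j : Fin (m + 2)) (hj : j ≠ i), j.val < r →
          P.map (SimplexCategory.δ j).op τ = u.app _ (horn.face i j hj) := by
    intro r
    induction r with
    | zero =>
      intro _
      obtain ⟨τ, hτ⟩ := hsurj _ x
      exact ⟨τ, hτ, fun j hj h => absurd h (Nat.not_lt_zero _)⟩
    | succ r ih =>
      intro hr
      obtain ⟨τ, hτ, hfaces⟩ := ih (by omega)
      have him : i.val ≤ m + 1 := by omega
      obtain ⟨R, hRval⟩ : ∃ R : Fin (m + 2), R.val = r := ⟨⟨r, by omega⟩, rfl⟩
      obtain ⟨C, hCval⟩ : ∃ C : Fin (m + 1), C.val = r := ⟨⟨r, by omega⟩, rfl⟩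
      have hRi : R ≠ i := Fin.ne_of_val_ne (by omega)
      obtain ⟨g, hg, -⟩ := hprin _ (P.map (SimplexCategory.δ R).op τ)
        (u.app _ (horn.face i R hRi)) (hfib τ hτ R hRi)
      refine ⟨a _ τ (G.map (SimplexCategory.σ C).op g), ?_, ?_⟩
      · rw [ha_over]; exact hτ
      · intro j hj hjr
        rcases Nat.lt_or_ge j.val r with hcase | hcase
        · -- a previously filled face
          obtain ⟨m', rfl⟩ : ∃ m', m = m' + 1 := ⟨m - 1, by omega⟩
          obtain ⟨j₀, hj₀⟩ : ∃ t : Fin (m' + 2), t.val = j.val := ⟨⟨j.val, by omega⟩, rfl⟩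
          obtain ⟨c₁, hc₁⟩ : ∃ t : Fin (m' + 1), t.val = r - 1 := ⟨⟨r - 1, by omega⟩, rfl⟩
          obtain ⟨e₁, he₁⟩ : ∃ t : Fin (m' + 2), t.val = r - 1 := ⟨⟨r - 1, by omega⟩, rfl⟩
          refine facetriv τ R hRi C g hg j hj (hfaces j hj hcase) (⦋m'⦌ : SimplexCategory)
            (SimplexCategory.δ j₀) (SimplexCategory.σ c₁) (SimplexCategory.δ e₁) ?_ ?_
          · have h1 : j = Fin.castSucc j₀ :=
              Fin.ext (by simp only [Fin.coe_castSucc]; omega)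
            have h2 : C = Fin.succ c₁ :=
              Fin.ext (by simp only [Fin.val_succ]; omega)
            rw [h1, h2]
            exact SimplexCategory.δ_comp_σ_of_le
              (by simp only [Fin.le_def, Fin.coe_castSucc]; omega)
          · have h1 : R = Fin.succ e₁ :=
              Fin.ext (by simp only [Fin.val_succ]; omega)
            have h2 : j = Fin.castSucc j₀ :=
              Fin.ext (by simp only [Fin.coe_castSucc]; omega)
            rw [h1, h2]
            exact SimplexCategory.δ_comp_δ (by simp only [Fin.le_def]; omega)
        · -- the new face `j = R`
          have hjR : j = R := Fin.ext (by omega)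
          subst hjR
          rw [ha_map]
          have hid : SimplexCategory.δ j ≫ SimplexCategory.σ C
              = 𝟙 (⦋m⦌ : SimplexCategory) :=
            SimplexCategory.δ_comp_σ_self' (i := C) (j := j)
              (Fin.ext (by simp only [Fin.coe_castSucc]; omega))
          have h3 : G.map (SimplexCategory.δ j).op (G.map (SimplexCategory.σ C).op g) = g := by
            calc G.map (SimplexCategory.δ j).op (G.map (SimplexCategory.σ C).op g)
                = G.map (SimplexCategory.δ j ≫ SimplexCategory.σ C).op g := (hGG _ _ _).symm
              _ = G.map (𝟙 (op (⦋m⦌ : SimplexCategory))) g := by rw [hid, op_id]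
              _ = g := by rw [G.map_id]; rfl
          rw [h3]
          exact hg
  -- phase 2: fill the faces above `i`, from the top down
  have phase2 : ∀ s : ℕ,
      ∃ τ : P.obj (op (⦋m + 1⦌ : SimplexCategory)),
        p.app _ τ = x ∧
        ∀ (j : Fin (m + 2)) (hj : j ≠ i), (j.val < i.val ∨ m + 2 ≤ j.val + s) →
          P.map (SimplexCategory.δ j).op τ = u.app _ (horn.face i j hj) := by
    intro s
    induction s with
    | zero =>
      obtain ⟨τ, hτ, hfaces⟩ := phase1 i.val le_rfl
      refine ⟨τ, hτ, fun j hj h => hfaces j hj ?_⟩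
      rcases h with h | h
      · exact h
      · omega
    | succ s ih =>
      obtain ⟨τ, hτ, hfaces⟩ := ih
      by_cases hns : m + 1 - s ≤ i.val ∨ m + 2 ≤ s
      · -- no new face is needed in this step
        refine ⟨τ, hτ, fun j hj h => hfaces j hj ?_⟩
        rcases h with h | h
        · exact Or.inl h
        · rcases Nat.lt_or_ge (j.val + s) (m + 2) with h' | h'
          · left
            have hji : j.val ≠ i.val := fun he => hj (Fin.ext he)
            omega
          · exact Or.inr h'
      · push_neg at hns
        obtain ⟨hns1, hns2⟩ := hns
        obtain ⟨r, hrdef⟩ : ∃ r, r = m + 1 - s := ⟨_, rfl⟩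
        -- `i.val < r`, `1 ≤ r`, `r ≤ m + 1`
        obtain ⟨R, hRval⟩ : ∃ R : Fin (m + 2), R.val = r := ⟨⟨r, by omega⟩, rfl⟩
        obtain ⟨C, hCval⟩ : ∃ C : Fin (m + 1), C.val = r - 1 := ⟨⟨r - 1, by omega⟩, rfl⟩
        have hRi : R ≠ i := Fin.ne_of_val_ne (by omega)
        obtain ⟨g, hg, -⟩ := hprin _ (P.map (SimplexCategory.δ R).op τ)
          (u.app _ (horn.face i R hRi)) (hfib τ hτ R hRi)
        refine ⟨a _ τ (G.map (SimplexCategory.σ C).op g), ?_, ?_⟩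
        · rw [ha_over]; exact hτ
        · intro j hj hjcond
          rcases Nat.lt_trichotomy j.val r with hlt | heq | hgt
          · -- a face below `i`
            have hji : j.val ≠ i.val := fun he => hj (Fin.ext he)
            have hjlt : j.val < i.val := by
              rcases hjcond with h | h
              · exact h
              · omega
            obtain ⟨m', rfl⟩ : ∃ m', m = m' + 1 := ⟨m - 1, by omega⟩
            obtain ⟨j₀, hj₀⟩ : ∃ t : Fin (m' + 2), t.val = j.val := ⟨⟨j.val, by omega⟩, rfl⟩
            obtain ⟨c₁, hc₁⟩ : ∃ t : Fin (m' + 1), t.val = r - 2 := ⟨⟨r - 2, by omega⟩, rfl⟩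
            obtain ⟨e₁, he₁⟩ : ∃ t : Fin (m' + 2), t.val = r - 1 := ⟨⟨r - 1, by omega⟩, rfl⟩
            refine facetriv τ R hRi C g hg j hj (hfaces j hj (Or.inl hjlt))
              (⦋m'⦌ : SimplexCategory)
              (SimplexCategory.δ j₀) (SimplexCategory.σ c₁) (SimplexCategory.δ e₁) ?_ ?_
            · have h1 : j = Fin.castSucc j₀ :=
                Fin.ext (by simp only [Fin.coe_castSucc]; omega)
              have h2 : C = Fin.succ c₁ :=
                Fin.ext (by simp only [Fin.val_succ]; omega)
              rw [h1, h2]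
              exact SimplexCategory.δ_comp_σ_of_le
                (by simp only [Fin.le_def, Fin.coe_castSucc]; omega)
            · have h1 : R = Fin.succ e₁ :=
                Fin.ext (by simp only [Fin.val_succ]; omega)
              have h2 : j = Fin.castSucc j₀ :=
                Fin.ext (by simp only [Fin.coe_castSucc]; omega)
              rw [h1, h2]
              exact SimplexCategory.δ_comp_δ (by simp only [Fin.le_def]; omega)
          · -- the new face `j = R`
            have hjR : j = R := Fin.ext (by omega)
            subst hjR
            rw [ha_map]
            have hid : SimplexCategory.δ j ≫ SimplexCategory.σ C
                = 𝟙 (⦋m⦌ : SimplexCategory) :=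
              SimplexCategory.δ_comp_σ_succ' (i := C) (j := j)
                (Fin.ext (by simp only [Fin.val_succ]; omega))
            have h3 : G.map (SimplexCategory.δ j).op (G.map (SimplexCategory.σ C).op g) = g := by
              calc G.map (SimplexCategory.δ j).op (G.map (SimplexCategory.σ C).op g)
                  = G.map (SimplexCategory.δ j ≫ SimplexCategory.σ C).op g := (hGG _ _ _).symm
                _ = G.map (𝟙 (op (⦋m⦌ : SimplexCategory))) g := by rw [hid, op_id]
                _ = g := by rw [G.map_id]; rfl
            rw [h3]
            exact hg
          · -- a previously filled face above `r`
            have hface : P.map (SimplexCategory.δ j).op τ = u.app _ (horn.face i j hj) :=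
              hfaces j hj (Or.inr (by omega))
            obtain ⟨m', rfl⟩ : ∃ m', m = m' + 1 := ⟨m - 1, by omega⟩
            obtain ⟨i₂, hi₂⟩ : ∃ t : Fin (m' + 2), t.val = j.val - 1 :=
              ⟨⟨j.val - 1, by omega⟩, rfl⟩
            obtain ⟨c₁, hc₁⟩ : ∃ t : Fin (m' + 1), t.val = r - 1 := ⟨⟨r - 1, by omega⟩, rfl⟩
            obtain ⟨e₁, he₁⟩ : ∃ t : Fin (m' + 2), t.val = r := ⟨⟨r, by omega⟩, rfl⟩
            refine facetriv τ R hRi C g hg j hj hface (⦋m'⦌ : SimplexCategory)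
              (SimplexCategory.δ i₂) (SimplexCategory.σ c₁) (SimplexCategory.δ e₁) ?_ ?_
            · have h1 : j = Fin.succ i₂ :=
                Fin.ext (by simp only [Fin.val_succ]; omega)
              have h2 : C = Fin.castSucc c₁ :=
                Fin.ext (by simp only [Fin.coe_castSucc]; omega)
              rw [h1, h2]
              exact SimplexCategory.δ_comp_σ_of_gt
                (by simp only [Fin.lt_def, Fin.coe_castSucc]; omega)
            · have h1 : j = Fin.succ i₂ :=
                Fin.ext (by simp only [Fin.val_succ]; omega)
              have h2 : R = Fin.castSucc e₁ :=
                Fin.ext (by simp only [Fin.coe_castSucc]; omega)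
              rw [h1, h2]
              exact (SimplexCategory.δ_comp_δ (by simp only [Fin.le_def]; omega)).symm
  -- conclude: the filler
  obtain ⟨τ, hτ, hfaces⟩ := phase2 (m + 2)
  have hfaces' : ∀ (j : Fin (m + 2)) (hj : j ≠ i),
      P.map (SimplexCategory.δ j).op τ = u.app _ (horn.face i j hj) :=
    fun j hj => hfaces j hj (Or.inr (by omega))
  refine CommSq.HasLift.mk' ⟨((SSet.yonedaEquiv (X := P) (n := (⦋m + 1⦌ : SimplexCategory)))).symm τ, ?_, ?_⟩
  · -- restriction to the horn
    apply SSet.horn.hom_ext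
    intro j hj
    exact hfaces' j hj
  · -- compatibility over the base
    apply ((SSet.yonedaEquiv (X := X) (n := (⦋m + 1⦌ : SimplexCategory)))).injective
    show p.app _ (((SSet.yonedaEquiv (X := P) (n := (⦋m + 1⦌ : SimplexCategory))))
      (((SSet.yonedaEquiv (X := P) (n := (⦋m + 1⦌ : SimplexCategory)))).symm τ))
        = (SSet.yonedaEquiv (X := X) (n := (⦋m + 1⦌ : SimplexCategory))) v
    rw [Equiv.apply_symm_apply]
    exact hτ.trans hxdef
end
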